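/- Let p : ℝ^n → ℝ be a homogeneous degree-d multilinear polynomial and let k ≥ 1 be a real number. Let X be uniformly distributed on {−1,1}^n and let Y be a vector of n independent standard Gaussians. Then E[|p(X)|^k] ≤ (π/2)^{dk/2} · E[|p(Y)|^k]. -/

import Mathlib

open MeasureTheory ProbabilityTheory MvPolynomial

/-- The standard Gaussian measure on `ℝⁿ`. -/
noncomputable def stdGaussianPi (n : ℕ) : Measure (Fin n → ℝ) :=
  Measure.pi fun _ => gaussianReal 0 1

/-- A polynomial is multilinear if it has degree at most 1 in each variable. -/
def IsMultilinearPoly {σ : Type*} (p : MvPolynomial σ ℝ) : Prop :=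
  ∀ m ∈ p.support, ∀ i, m i ≤ 1

namespace BernoulliAux

open Real Set Filter
open scoped ENNReal NNReal

instance (n : ℕ) : IsProbabilityMeasure (stdGaussianPi n) := by
  unfold stdGaussianPi; infer_instance

/-- If `f` is integrable on `(0,∞)` (w.r.t. Lebesgue), then `f ∘ abs` is integrable on `ℝ`. -/
lemma integrable_comp_abs {f : ℝ → ℝ} (hf : IntegrableOn f (Ioi (0:ℝ))) :
    Integrable (fun x => f |x|) := by
  have hIoi : IntegrableOn (fun x => f |x|) (Ioi (0:ℝ)) :=
    hf.congr_fun (fun x hx => by rw [abs_of_pos hx]) measurableSet_Ioi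
  have hIic : IntegrableOn (fun x => f |x|) (Iic (0:ℝ)) := by
    rw [← Measure.map_neg_eq_self (volume : Measure ℝ)]
    have m : MeasurableEmbedding fun x : ℝ => -x := (Homeomorph.neg ℝ).measurableEmbedding
    rw [m.integrableOn_map_iff]
    simp_rw [Function.comp_def, abs_neg, neg_preimage, neg_Iic, neg_zero]
    exact Iff.mpr integrableOn_Ici_iff_integrableOn_Ioi hIoi
  have h := hIic.union hIoi
  rwa [Iic_union_Ioi, integrableOn_univ] at h

lemma integrable_abs_rpow_gaussian {s : ℝ} (hs : 0 ≤ s) :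
    Integrable (fun x => |x| ^ s) (gaussianReal 0 1) := by
  have hvol : Integrable (fun x : ℝ => |x| ^ s * rexp (-(2:ℝ)⁻¹ * x ^ 2)) := by
    have h1 : IntegrableOn (fun x : ℝ => x ^ s * rexp (-(2:ℝ)⁻¹ * x ^ 2)) (Ioi 0) :=
      integrableOn_rpow_mul_exp_neg_mul_sq (by norm_num) (by linarith)
    refine (integrable_comp_abs h1).congr (Eventually.of_forall fun x => ?_)
    simp only [sq_abs]
  have hmeas : Measurable fun x : ℝ => (gaussianPDFReal 0 1 x).toNNReal :=
    (measurable_gaussianPDFReal 0 1).real_toNNReal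
  rw [gaussianReal_of_var_ne_zero _ one_ne_zero]
  rw [show gaussianPDF 0 1 = fun x => ((gaussianPDFReal 0 1 x).toNNReal : ℝ≥0∞) from rfl]
  rw [integrable_withDensity_iff_integrable_smul hmeas]
  refine (hvol.const_mul ((Real.sqrt (2 * π))⁻¹)).congr (Eventually.of_forall fun x => ?_)
  have hco : ((gaussianPDFReal 0 1 x).toNNReal : ℝ) = gaussianPDFReal 0 1 x :=
    Real.coe_toNNReal _ (gaussianPDFReal_nonneg 0 1 x)
  show (√(2 * π))⁻¹ * (|x| ^ s * rexp (-(2:ℝ)⁻¹ * x ^ 2))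
      = (gaussianPDFReal 0 1 x).toNNReal • |x| ^ s
  rw [NNReal.smul_def, hco]
  simp only [gaussianPDFReal, NNReal.coe_one, mul_one, sub_zero, smul_eq_mul]
  rw [show -x ^ 2 / (2:ℝ) = -(2:ℝ)⁻¹ * x ^ 2 by ring]
  ring

lemma integral_abs_gaussian : ∫ x, |x| ∂(gaussianReal 0 1) = (2 / π) ^ ((1:ℝ)/2) := by
  have hmeas : Measurable fun x : ℝ => (gaussianPDFReal 0 1 x).toNNReal :=
    (measurable_gaussianPDFReal 0 1).real_toNNReal
  have hIoi : ∫ x in Ioi (0:ℝ), x * rexp (-(2:ℝ)⁻¹ * x ^ 2) = 1 := by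
    have h := integral_rpow_mul_exp_neg_mul_rpow (p := 2) (q := 1) (b := (2:ℝ)⁻¹)
      (by norm_num) (by norm_num) (by norm_num)
    rw [show (-(1 + 1)/2 : ℝ) = -1 by norm_num, Real.rpow_neg_one,
      show ((1 + 1)/2 : ℝ) = 1 by norm_num, Real.Gamma_one] at h
    have heq : EqOn (fun x : ℝ => x ^ (1:ℝ) * rexp (-(2:ℝ)⁻¹ * x ^ (2:ℝ)))
        (fun x : ℝ => x * rexp (-(2:ℝ)⁻¹ * x ^ 2)) (Ioi (0:ℝ)) := by
      intro x hx
      simp only [Real.rpow_one]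
      norm_cast
    rw [← setIntegral_congr_fun measurableSet_Ioi heq, h]
    norm_num
  have hval : ∫ x, |x| * rexp (-(2:ℝ)⁻¹ * x ^ 2) = 2 := by
    have h2 := integral_comp_abs (f := fun x : ℝ => x * rexp (-(2:ℝ)⁻¹ * x ^ 2))
    simp only [sq_abs] at h2
    rw [h2, hIoi, mul_one]
  rw [gaussianReal_of_var_ne_zero _ one_ne_zero]
  rw [show gaussianPDF 0 1 = fun x => ((gaussianPDFReal 0 1 x).toNNReal : ℝ≥0∞) from rfl]
  rw [integral_withDensity_eq_integral_smul hmeas]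
  have heq : (fun x : ℝ => (gaussianPDFReal 0 1 x).toNNReal • |x|)
      = fun x : ℝ => (Real.sqrt (2 * π))⁻¹ * (|x| * rexp (-(2:ℝ)⁻¹ * x ^ 2)) := by
    funext x
    have hco : ((gaussianPDFReal 0 1 x).toNNReal : ℝ) = gaussianPDFReal 0 1 x :=
      Real.coe_toNNReal _ (gaussianPDFReal_nonneg 0 1 x)
    rw [NNReal.smul_def, hco]
    simp only [gaussianPDFReal, NNReal.coe_one, mul_one, sub_zero, smul_eq_mul]
    rw [show -x ^ 2 / (2:ℝ) = -(2:ℝ)⁻¹ * x ^ 2 by ring]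
    ring
  rw [heq, integral_const_mul, hval]
  rw [Real.sqrt_eq_rpow, Real.div_rpow (by norm_num) pi_pos.le,
    Real.mul_rpow (by norm_num) pi_pos.le]
  have h2 : (2:ℝ) = 2 ^ ((1:ℝ)/2) * 2 ^ ((1:ℝ)/2) := by
    rw [← Real.rpow_add (by norm_num)]; norm_num
  have hπ : (0:ℝ) < π ^ ((1:ℝ)/2) := Real.rpow_pos_of_pos pi_pos _
  have h20 : (0:ℝ) < 2 ^ ((1:ℝ)/2) := Real.rpow_pos_of_pos (by norm_num) _
  field_simp
  nlinarith [h2, hπ, h20]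

lemma integrable_abs_gaussian : Integrable (fun x => |x|) (gaussianReal 0 1) := by
  have := integrable_abs_rpow_gaussian (s := 1) (by norm_num)
  simpa [Real.rpow_one] using this

lemma pi_integral_prod {n : ℕ} (f : Fin n → ℝ → ℝ) :
    ∫ y, ∏ i, f i (y i) ∂stdGaussianPi n = ∏ i, ∫ t, f i t ∂(gaussianReal 0 1) := by
  letI : MeasureSpace ℝ := ⟨gaussianReal 0 1⟩
  haveI : SigmaFinite (volume : Measure ℝ) := inferInstanceAs (SigmaFinite (gaussianReal 0 1))
  exact MeasureTheory.integral_fintype_prod_eq_prod (μ := fun _ => gaussianReal 0 1) f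

lemma pi_integrable_prod {n : ℕ} (f : Fin n → ℝ → ℝ)
    (hf : ∀ i, Integrable (f i) (gaussianReal 0 1)) :
    Integrable (fun y => ∏ i, f i (y i)) (stdGaussianPi n) := by
  letI : MeasureSpace ℝ := ⟨gaussianReal 0 1⟩
  haveI : SigmaFinite (volume : Measure ℝ) := inferInstanceAs (SigmaFinite (gaussianReal 0 1))
  exact MeasureTheory.Integrable.fintype_prod hf

lemma measurable_eval {n : ℕ} (p : MvPolynomial (Fin n) ℝ) :
    Measurable fun y : Fin n → ℝ => eval y p := by
  simp only [eval_eq']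
  exact Finset.measurable_sum _ fun m _ =>
    (Finset.measurable_prod _ fun i _ => (measurable_pi_apply i).pow_const _).const_mul _

lemma integrable_aux {n : ℕ} (p : MvPolynomial (Fin n) ℝ) {k : ℝ} (hk : 0 ≤ k)
    (z : (Fin n → ℝ) → Fin n → ℝ) (hzm : Measurable z) (hzb : ∀ y i, |z y i| = |y i|) :
    Integrable (fun y => |eval (z y) p| ^ k) (stdGaussianPi n) := by
  classical
  set D := p.totalDegree with hD
  set B := (∑ m ∈ p.support, |coeff m p|) + 1 with hB
  have hB0 : 0 < B := by
    have : 0 ≤ ∑ m ∈ p.support, |coeff m p| := Finset.sum_nonneg fun _ _ => abs_nonneg _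
    linarith
  have key : ∀ w : Fin n → ℝ, |eval w p| ≤ B * ∏ i, (1 + |w i|) ^ D := by
    intro w
    have h1 : |eval w p| ≤ ∑ m ∈ p.support, |coeff m p| * ∏ i, (1 + |w i|) ^ D := by
      rw [eval_eq']
      refine (Finset.abs_sum_le_sum_abs _ _).trans (Finset.sum_le_sum fun m hm => ?_)
      rw [abs_mul]
      refine mul_le_mul_of_nonneg_left ?_ (abs_nonneg _)
      rw [Finset.abs_prod]
      refine Finset.prod_le_prod (fun i _ => abs_nonneg _) fun i _ => ?_
      rw [abs_pow]
      have hmi : m i ≤ D := by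
        have h2 : m i ≤ m.sum fun _ e => e := by
          rw [Finsupp.sum]
          by_cases h : m i = 0
          · simp [h]
          · exact Finset.single_le_sum (fun _ _ => Nat.zero_le _)
              (Finsupp.mem_support_iff.mpr h)
        exact h2.trans (le_totalDegree hm)
      calc |w i| ^ m i ≤ (1 + |w i|) ^ m i :=
            pow_le_pow_left₀ (abs_nonneg _) (by linarith [abs_nonneg (w i)]) _
        _ ≤ (1 + |w i|) ^ D :=
            pow_le_pow_right₀ (by linarith [abs_nonneg (w i)]) hmi
    rw [← Finset.sum_mul] at h1
    refine h1.trans (mul_le_mul_of_nonneg_right (by linarith) ?_)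
    exact Finset.prod_nonneg fun i _ => pow_nonneg (by positivity) _
  set s : ℝ := (D : ℝ) * k with hs
  have hs0 : 0 ≤ s := by positivity
  have hint1 : Integrable (fun t : ℝ => (1 + |t|) ^ s) (gaussianReal 0 1) := by
    have hb : Integrable (fun t : ℝ => 2 ^ s * (1 + |t| ^ s)) (gaussianReal 0 1) :=
      ((integrable_const (1:ℝ)).add (integrable_abs_rpow_gaussian hs0)).const_mul _
    refine hb.mono' ?_ (Eventually.of_forall fun t => ?_)
    · exact ((Real.continuous_rpow_const hs0).comp
        (continuous_const.add continuous_abs)).aestronglyMeasurable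
    · rw [Real.norm_eq_abs, abs_of_nonneg (Real.rpow_nonneg (by positivity) _)]
      have e1 : (0:ℝ) ≤ |t| ^ s := Real.rpow_nonneg (abs_nonneg t) s
      have e2 : (0:ℝ) ≤ (2:ℝ) ^ s := Real.rpow_nonneg (by norm_num) s
      rcases le_total (|t|) 1 with h | h
      · calc (1 + |t|) ^ s ≤ (2:ℝ) ^ s :=
              Real.rpow_le_rpow (by positivity) (by linarith) hs0
          _ ≤ 2 ^ s * (1 + |t| ^ s) := by nlinarith
      · calc (1 + |t|) ^ s ≤ (2 * |t|) ^ s :=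
              Real.rpow_le_rpow (by positivity) (by linarith) hs0
          _ = 2 ^ s * |t| ^ s := Real.mul_rpow (by norm_num) (abs_nonneg t)
          _ ≤ 2 ^ s * (1 + |t| ^ s) := by nlinarith
  have hintg : Integrable (fun y : Fin n → ℝ => B ^ k * ∏ i, (1 + |y i|) ^ s)
      (stdGaussianPi n) :=
    (pi_integrable_prod (fun i t => (1 + |t|) ^ s) fun i => hint1).const_mul _
  have hmeas : AEStronglyMeasurable (fun y => |eval (z y) p| ^ k) (stdGaussianPi n) :=
    (((Real.continuous_rpow_const hk).comp continuous_abs).measurable.comp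
      ((measurable_eval p).comp hzm)).aestronglyMeasurable
  refine hintg.mono' hmeas (Eventually.of_forall fun y => ?_)
  rw [Real.norm_eq_abs, abs_of_nonneg (Real.rpow_nonneg (abs_nonneg _) _)]
  calc |eval (z y) p| ^ k ≤ (B * ∏ i, (1 + |z y i|) ^ D) ^ k :=
        Real.rpow_le_rpow (abs_nonneg _) (key _) hk
    _ = B ^ k * ∏ i, (1 + |y i|) ^ s := by
        rw [Real.mul_rpow hB0.le
          (Finset.prod_nonneg fun i _ => pow_nonneg (by positivity) _)]
        congr 1
        rw [← Real.finset_prod_rpow _ _ (fun i _ => pow_nonneg (by positivity) _) k]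
        refine Finset.prod_congr rfl fun i _ => ?_
        rw [hzb, ← Real.rpow_natCast (1 + |y i|) D, ← Real.rpow_mul (by positivity)]

lemma integral_pow_abs {e : ℕ} (he : e ≤ 1) (a : ℝ) :
    ∫ t, (a * |t|) ^ e ∂(gaussianReal 0 1) = a ^ e * ((2 / π) ^ ((1:ℝ)/2)) ^ e := by
  interval_cases e
  · simp
  · simp only [pow_one]
    rw [show (fun t : ℝ => a * |t|) = fun t : ℝ => a * |t| from rfl]
    rw [MeasureTheory.integral_const_mul, integral_abs_gaussian]

lemma integrable_monomial {n : ℕ} (x : Fin n → ℝ) (m : Fin n →₀ ℕ) (hm : ∀ i, m i ≤ 1) :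
    Integrable (fun y : Fin n → ℝ => ∏ i, (x i * |y i|) ^ m i) (stdGaussianPi n) := by
  refine pi_integrable_prod (fun i t => (x i * |t|) ^ m i) fun i => ?_
  rcases Nat.le_one_iff_eq_zero_or_eq_one.mp (hm i) with h | h
  · simp only [h, pow_zero]
    exact integrable_const 1
  · simp only [h, pow_one]
    exact integrable_abs_gaussian.const_mul _

lemma gaussian_integral_eval {n d : ℕ} (p : MvPolynomial (Fin n) ℝ)
    (hhom : p.IsHomogeneous d) (hml : IsMultilinearPoly p) (x : Fin n → ℝ) :
    ∫ y, eval (fun i => x i * |y i|) p ∂stdGaussianPi n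
      = ((2 / π) ^ ((1:ℝ)/2)) ^ d * eval x p := by
  classical
  set c : ℝ := (2 / π) ^ ((1:ℝ)/2) with hc
  have hint : ∀ m ∈ p.support,
      Integrable (fun y : Fin n → ℝ => coeff m p * ∏ i, (x i * |y i|) ^ m i)
        (stdGaussianPi n) :=
    fun m hm => (integrable_monomial x m (hml m hm)).const_mul _
  calc ∫ y, eval (fun i => x i * |y i|) p ∂stdGaussianPi n
      = ∫ y, ∑ m ∈ p.support, coeff m p * ∏ i, (x i * |y i|) ^ m i ∂stdGaussianPi n := by
        simp only [eval_eq']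
    _ = ∑ m ∈ p.support, ∫ y, coeff m p * ∏ i, (x i * |y i|) ^ m i ∂stdGaussianPi n :=
        integral_finset_sum _ hint
    _ = ∑ m ∈ p.support, coeff m p * (c ^ d * ∏ i, x i ^ m i) := by
        refine Finset.sum_congr rfl fun m hm => ?_
        rw [MeasureTheory.integral_const_mul]
        congr 1
        have hdeg : ∑ i, m i = d := by
          have h0 : m.degree = d := by
            by_contra h
            exact mem_support_iff.mp hm (hhom.coeff_eq_zero h)
          rw [← h0, Finsupp.degree]
          exact (Finset.sum_subset (Finset.subset_univ _) fun i _ hi =>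
            Finsupp.notMem_support_iff.mp hi).symm
        calc ∫ y, ∏ i, (x i * |y i|) ^ m i ∂stdGaussianPi n
            = ∏ i, ∫ t, (x i * |t|) ^ m i ∂(gaussianReal 0 1) :=
              pi_integral_prod (fun i t => (x i * |t|) ^ m i)
          _ = ∏ i, x i ^ m i * c ^ m i :=
              Finset.prod_congr rfl fun i _ => integral_pow_abs (hml m hm i) (x i)
          _ = (∏ i, x i ^ m i) * ∏ i, c ^ m i := Finset.prod_mul_distrib
          _ = (∏ i, x i ^ m i) * c ^ d := by
              rw [Finset.prod_pow_eq_pow_sum, hdeg]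
          _ = c ^ d * ∏ i, x i ^ m i := mul_comm _ _
    _ = c ^ d * eval x p := by
        rw [eval_eq', Finset.mul_sum]
        exact Finset.sum_congr rfl fun m hm => by ring

lemma jensen_abs_rpow {α : Type*} [MeasurableSpace α] {μ : Measure α}
    [IsProbabilityMeasure μ] {f : α → ℝ} {k : ℝ} (hk : 1 ≤ k) (hf : Integrable f μ)
    (hfk : Integrable (fun a => |f a| ^ k) μ) :
    |∫ a, f a ∂μ| ^ k ≤ ∫ a, |f a| ^ k ∂μ := by
  have hk0 : (0:ℝ) ≤ k := le_trans zero_le_one hk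
  have himg : (abs '' (univ : Set ℝ)) = Ici (0:ℝ) := by
    ext t
    constructor
    · rintro ⟨u, -, rfl⟩; exact abs_nonneg u
    · intro ht; exact ⟨t, trivial, abs_of_nonneg ht⟩
  have hconv : ConvexOn ℝ (univ : Set ℝ) (fun t : ℝ => |t| ^ k) := by
    have h1 : ConvexOn ℝ (abs '' (univ : Set ℝ)) (fun t : ℝ => t ^ k) := by
      rw [himg]; exact convexOn_rpow hk
    have h2 : ConvexOn ℝ (univ : Set ℝ) (abs : ℝ → ℝ) := by
      have h := (convexOn_univ_norm : ConvexOn ℝ univ (norm : ℝ → ℝ))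
      rw [show (norm : ℝ → ℝ) = abs from funext Real.norm_eq_abs] at h
      exact h
    have h3 : MonotoneOn (fun t : ℝ => t ^ k) (abs '' (univ : Set ℝ)) := by
      rw [himg]
      intro a ha b hb hab
      exact Real.rpow_le_rpow ha hab hk0
    exact h1.comp h2 h3
  have hcont : ContinuousOn (fun t : ℝ => |t| ^ k) (univ : Set ℝ) :=
    ((Real.continuous_rpow_const hk0).comp continuous_abs).continuousOn
  exact hconv.map_integral_le hcont isClosed_univ
    (Eventually.of_forall fun _ => mem_univ _) hf hfk

/-- Signs attached to a vector of booleans. -/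
def sgn {n : ℕ} (σ : Fin n → Bool) : Fin n → ℝ := fun i => if σ i then 1 else -1

lemma abs_sgn {n : ℕ} (σ : Fin n → Bool) (i : Fin n) : |sgn σ i| = 1 := by
  by_cases h : σ i <;> simp [sgn, h]

lemma measurePreserving_sgn_mul {n : ℕ} (σ : Fin n → Bool) :
    MeasurePreserving (fun y : Fin n → ℝ => fun i => sgn σ i * y i)
      (stdGaussianPi n) (stdGaussianPi n) := by
  have h1 : ∀ i : Fin n, MeasurePreserving (fun t : ℝ => sgn σ i * t)
      (gaussianReal 0 1) (gaussianReal 0 1) := by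
    intro i
    refine ⟨measurable_const_mul _, ?_⟩
    by_cases h : σ i
    · simp [sgn, h, Measure.map_id']
    · simp only [sgn, h, if_false, Bool.false_eq_true]
      have hmap := gaussianReal_map_const_mul (μ := 0) (v := 1) (-1)
      have hv : (⟨(-1:ℝ) ^ 2, sq_nonneg _⟩ : ℝ≥0) * 1 = 1 := by ext; norm_num
      rw [hmap]
      congr 1
      · norm_num
  exact measurePreserving_pi _ _ h1

end BernoulliAux

open BernoulliAux in
/-- Bernoulli moments are dominated by Gaussian moments: for `p` a homogeneous degree-`d`
multilinear polynomial, `X` uniform on `{-1,1}ⁿ` and `Y` standard Gaussian on `ℝⁿ`,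
`E[|p(X)|^k] ≤ (π/2)^{dk/2} E[|p(Y)|^k]` for every real `k ≥ 1`. -/
theorem bernoulliMomentLem (n d : ℕ) (p : MvPolynomial (Fin n) ℝ)
    (hhom : p.IsHomogeneous d) (hml : IsMultilinearPoly p) (k : ℝ) (hk : 1 ≤ k) :
    (∑ σ : Fin n → Bool, |eval (fun i => if σ i then (1 : ℝ) else -1) p| ^ k) / 2 ^ n ≤
      (Real.pi / 2) ^ ((d : ℝ) * k / 2) * ∫ y, |eval y p| ^ k ∂stdGaussianPi n := by
  classical
  have hk0 : (0:ℝ) ≤ k := le_trans zero_le_one hk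
  have hπ : (0:ℝ) < Real.pi := Real.pi_pos
  set c : ℝ := (2 / Real.pi) ^ ((1:ℝ)/2) with hc
  have hc0 : 0 < c := Real.rpow_pos_of_pos (by positivity) _
  set CK : ℝ := (Real.pi / 2) ^ ((d:ℝ) * k / 2) with hCK
  have hCK0 : 0 < CK := Real.rpow_pos_of_pos (by positivity) _
  have hzmF : ∀ σ : Fin n → Bool, Measurable fun y : Fin n → ℝ => fun i => sgn σ i * |y i| :=
    fun σ => measurable_pi_lambda _ fun i => (measurable_pi_apply i).abs.const_mul _
  have hzmG : ∀ σ : Fin n → Bool, Measurable fun y : Fin n → ℝ => fun i => sgn σ i * y i :=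
    fun σ => measurable_pi_lambda _ fun i => (measurable_pi_apply i).const_mul _
  have hzbF : ∀ (σ : Fin n → Bool) (y : Fin n → ℝ) (i : Fin n),
      abs (sgn σ i * |y i|) = |y i| := fun σ y i => by
    rw [abs_mul, abs_sgn, one_mul, abs_abs]
  have hzbG : ∀ (σ : Fin n → Bool) (y : Fin n → ℝ) (i : Fin n),
      |sgn σ i * y i| = |y i| := fun σ y i => by
    rw [abs_mul, abs_sgn, one_mul]
  have hF : ∀ σ : Fin n → Bool,
      Integrable (fun y => |eval (fun i => sgn σ i * |y i|) p| ^ k) (stdGaussianPi n) :=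
    fun σ => integrable_aux p hk0 (fun y i => sgn σ i * |y i|) (hzmF σ) (hzbF σ)
  have hG : ∀ σ : Fin n → Bool,
      Integrable (fun y => |eval (fun i => sgn σ i * y i) p| ^ k) (stdGaussianPi n) :=
    fun σ => integrable_aux p hk0 (fun y i => sgn σ i * y i) (hzmG σ) (hzbG σ)
  have hH : Integrable (fun y => |eval y p| ^ k) (stdGaussianPi n) :=
    integrable_aux p hk0 id measurable_id fun y i => rfl
  have hfInt : ∀ σ : Fin n → Bool,
      Integrable (fun y => eval (fun i => sgn σ i * |y i|) p) (stdGaussianPi n) := by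
    intro σ
    have h2 : Integrable (fun y => |eval (fun i => sgn σ i * |y i|) p|) (stdGaussianPi n) := by
      simpa [Real.rpow_one] using
        integrable_aux p zero_le_one (fun y i => sgn σ i * |y i|) (hzmF σ) (hzbF σ)
    have hm : AEStronglyMeasurable (fun y => eval (fun i => sgn σ i * |y i|) p)
        (stdGaussianPi n) := ((measurable_eval p).comp (hzmF σ)).aestronglyMeasurable
    exact (integrable_norm_iff hm).mp (by simpa [Real.norm_eq_abs] using h2)
  have step1 : ∀ σ : Fin n → Bool,
      |eval (sgn σ) p| ^ k
        ≤ CK * ∫ y, |eval (fun i => sgn σ i * |y i|) p| ^ k ∂stdGaussianPi n := by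
    intro σ
    have hE := gaussian_integral_eval p hhom hml (sgn σ)
    have hJ := jensen_abs_rpow hk (hfInt σ) (hF σ)
    rw [hE, abs_mul, abs_of_pos (pow_pos hc0 d),
      Real.mul_rpow (pow_pos hc0 d).le (abs_nonneg _)] at hJ
    have hcd : ((c ^ d : ℝ)) ^ k = CK⁻¹ := by
      rw [← Real.rpow_natCast c d, hc, hCK, ← Real.rpow_mul (by positivity),
        ← Real.rpow_mul (by positivity), ← Real.inv_rpow (by positivity), inv_div]
      congr 1
      ring
    rw [hcd] at hJ
    have hm := mul_le_mul_of_nonneg_left hJ hCK0.le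
    calc |eval (sgn σ) p| ^ k = CK * (CK⁻¹ * |eval (sgn σ) p| ^ k) := by
          rw [← mul_assoc, mul_inv_cancel₀ hCK0.ne', one_mul]
      _ ≤ _ := hm
  have flip : ∀ y : Fin n → ℝ,
      (∑ σ : Fin n → Bool, |eval (fun i => sgn σ i * |y i|) p| ^ k)
        = ∑ σ : Fin n → Bool, |eval (fun i => sgn σ i * y i) p| ^ k := by
    intro y
    have hτinv : Function.Involutive
        (fun (σ : Fin n → Bool) i => xor (σ i) (decide (y i < 0))) := by
      intro σ; funext i; simp
    refine Fintype.sum_bijective _ hτinv.bijective _ _ fun σ => ?_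
    have harg : (fun i => sgn σ i * |y i|)
        = fun i => sgn (fun j => xor (σ j) (decide (y j < 0))) i * y i := by
      funext i
      by_cases hyi : y i < 0
      · by_cases hσ : σ i <;> simp [sgn, hyi, hσ, abs_of_neg hyi] <;> ring
      · by_cases hσ : σ i <;> simp [sgn, hyi, hσ, abs_of_nonneg (not_lt.mp hyi)]
    rw [harg]
  have mp : ∀ σ : Fin n → Bool,
      ∫ y, |eval (fun i => sgn σ i * y i) p| ^ k ∂stdGaussianPi n
        = ∫ y, |eval y p| ^ k ∂stdGaussianPi n := by
    intro σ
    have hT := measurePreserving_sgn_mul σ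
    have hmeasH : AEStronglyMeasurable (fun y : Fin n → ℝ => |eval y p| ^ k)
        (stdGaussianPi n) :=
      (((Real.continuous_rpow_const hk0).comp continuous_abs).measurable.comp
        (measurable_eval p)).aestronglyMeasurable
    calc ∫ y, |eval (fun i => sgn σ i * y i) p| ^ k ∂stdGaussianPi n
        = ∫ y, |eval y p| ^ k
            ∂(Measure.map (fun y : Fin n → ℝ => fun i => sgn σ i * y i) (stdGaussianPi n)) :=
          (integral_map hT.aemeasurable (hT.map_eq.symm ▸ hmeasH)).symm
      _ = _ := by rw [hT.map_eq]
  have sum_int :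
      (∑ σ : Fin n → Bool, ∫ y, |eval (fun i => sgn σ i * |y i|) p| ^ k ∂stdGaussianPi n)
        = (2:ℝ) ^ n * ∫ y, |eval y p| ^ k ∂stdGaussianPi n := by
    calc (∑ σ : Fin n → Bool, ∫ y, |eval (fun i => sgn σ i * |y i|) p| ^ k ∂stdGaussianPi n)
        = ∫ y, ∑ σ : Fin n → Bool, |eval (fun i => sgn σ i * |y i|) p| ^ k ∂stdGaussianPi n :=
          (integral_finset_sum _ fun σ _ => hF σ).symm
      _ = ∫ y, ∑ σ : Fin n → Bool, |eval (fun i => sgn σ i * y i) p| ^ k ∂stdGaussianPi n :=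
          integral_congr_ae (Filter.Eventually.of_forall fun y => flip y)
      _ = ∑ σ : Fin n → Bool, ∫ y, |eval (fun i => sgn σ i * y i) p| ^ k ∂stdGaussianPi n :=
          integral_finset_sum _ fun σ _ => hG σ
      _ = ∑ σ : Fin n → Bool, ∫ y, |eval y p| ^ k ∂stdGaussianPi n :=
          Finset.sum_congr rfl fun σ _ => mp σ
      _ = (2:ℝ) ^ n * ∫ y, |eval y p| ^ k ∂stdGaussianPi n := by
          rw [Finset.sum_const, Finset.card_univ]
          simp only [Fintype.card_fun, Fintype.card_fin, Fintype.card_bool, nsmul_eq_mul]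
          push_cast
          ring
  rw [div_le_iff₀ (by positivity : (0:ℝ) < 2 ^ n)]
  calc ∑ σ : Fin n → Bool, |eval (fun i => if σ i then (1:ℝ) else -1) p| ^ k
      = ∑ σ : Fin n → Bool, |eval (sgn σ) p| ^ k := rfl
    _ ≤ ∑ σ : Fin n → Bool,
          CK * ∫ y, |eval (fun i => sgn σ i * |y i|) p| ^ k ∂stdGaussianPi n :=
        Finset.sum_le_sum fun σ _ => step1 σ
    _ = CK * ∑ σ : Fin n → Bool,
          ∫ y, |eval (fun i => sgn σ i * |y i|) p| ^ k ∂stdGaussianPi n := by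
        rw [Finset.mul_sum]
    _ = (CK * ∫ y, |eval y p| ^ k ∂stdGaussianPi n) * 2 ^ n := by rw [sum_int]; ring
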